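/- Let G be a 2-connected simple graph, let u and v be two distinct vertices of G, and let e = xy be an edge of G. Then there exists a path in G from u to v that contains the edge e. -/

import Mathlib

open SimpleGraph

/-- A graph is 2-connected if it has at least 3 vertices and remains connected
after the deletion of any single vertex. -/
def SimpleGraph.TwoConnected {V : Type*} [Fintype V] (G : SimpleGraph V) : Prop :=
  3 ≤ Fintype.card V ∧ ∀ v : V, (G.induce {u | u ≠ v}).Connected

section Aux

variable {V : Type*} {G : SimpleGraph V}

/-- Appending two paths that share only their common endpoint gives a path. -/
lemma aux_append_isPath {u z v : V} {p : G.Walk u z} {q : G.Walk z v}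
    (hp : p.IsPath) (hq : q.IsPath)
    (h : ∀ t, t ∈ p.support → t ∈ q.support → t = z) : (p.append q).IsPath := by
  rw [Walk.isPath_def, Walk.support_append]
  refine List.Nodup.append (p.isPath_def.mp hp) ?_ ?_
  · exact (q.isPath_def.mp hq).tail
  · intro t htp htq
    have htq' : t ∈ q.support := by
      rw [q.support_eq_cons]; exact List.mem_cons_of_mem _ htq
    have hz : t = z := h t htp htq'
    subst hz
    have hnd := q.isPath_def.mp hq
    rw [q.support_eq_cons] at hnd
    exact List.Nodup.notMem hnd htq

/-- First vertex of a walk belonging to a set `S` containing the endpoint. -/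
lemma aux_firsthit (S : V → Prop) :
    ∀ {a b : V} (R : G.Walk a b), S b →
      ∃ z, S z ∧ ∃ R1 : G.Walk a z,
        (∀ t ∈ R1.support, t ∈ R.support) ∧ (∀ t ∈ R1.support, S t → t = z)
  | _, _, Walk.nil, hb =>
      ⟨_, hb, Walk.nil, by simp, by simp⟩
  | a, b, Walk.cons h q, hb => by
    by_cases hSa : S a
    · exact ⟨a, hSa, Walk.nil, by simp, by simp⟩
    · obtain ⟨z, hz, R1, hsub, hfirst⟩ := aux_firsthit S q hb
      refine ⟨z, hz, Walk.cons h R1, ?_, ?_⟩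
      · intro t ht
        rw [Walk.support_cons] at ht ⊢
        rcases List.mem_cons.mp ht with rfl | ht
        · exact List.mem_cons_self
        · exact List.mem_cons_of_mem _ (hsub t ht)
      · intro t ht hSt
        rw [Walk.support_cons] at ht
        rcases List.mem_cons.mp ht with rfl | ht
        · exact absurd hSt hSa
        · exact hfirst t ht hSt

/-- In a graph whose vertex-deleted subgraphs are connected, any two vertices distinct
from `w` are joined by a path avoiding `w`. -/
lemma aux_avoid (h2 : ∀ w : V, (G.induce {t | t ≠ w}).Connected)
    {a b w : V} (ha : a ≠ w) (hb : b ≠ w) :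
    ∃ p : G.Walk a b, p.IsPath ∧ ∀ t ∈ p.support, t ≠ w := by
  classical
  obtain ⟨W⟩ := (h2 w).preconnected ⟨a, ha⟩ ⟨b, hb⟩
  let W' : G.Walk a b := W.map (SimpleGraph.Embedding.induce {t | t ≠ w}).toHom
  refine ⟨W'.toPath.1, W'.toPath.2, ?_⟩
  intro t ht
  have ht' : t ∈ W'.support := Walk.support_toPath_subset _ ht
  rw [show W'.support = W.support.map (SimpleGraph.Embedding.induce {t | t ≠ w}).toHom from
    Walk.support_map _ _] at ht'
  obtain ⟨s, _, rfl⟩ := List.mem_map.mp ht'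
  exact s.2

lemma aux_conn [Fintype V] (hcard : 3 ≤ Fintype.card V)
    (h2 : ∀ w : V, (G.induce {t | t ≠ w}).Connected) : G.Connected := by
  classical
  have hne : Nonempty V := Fintype.card_pos_iff.mp (by omega)
  haveI := hne
  refine SimpleGraph.Connected.mk fun a b => ?_
  have hc : ∃ c : V, c ≠ a ∧ c ≠ b := by
    by_contra hcon
    push_neg at hcon
    have hsub : (Finset.univ : Finset V) ⊆ {a, b} := by
      intro t _
      by_cases hta : t = a
      · simp [hta]
      · simp [hcon t hta]
    have := Finset.card_le_card hsub
    have hle : ({a, b} : Finset V).card ≤ 2 := Finset.card_insert_le a {b} |>.trans (by simp)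
    rw [Finset.card_univ] at this
    omega
  obtain ⟨c, hca, hcb⟩ := hc
  obtain ⟨p, _, _⟩ := aux_avoid h2 (Ne.symm hca) (Ne.symm hcb)
  exact ⟨p⟩

/-- Key lemma: if `u ∉ {x, y}` and `u ≠ v`, there is a `u`-`v` path through the edge `xy`. -/
lemma aux_key [Fintype V] (hcard : 3 ≤ Fintype.card V)
    (h2 : ∀ w : V, (G.induce {t | t ≠ w}).Connected)
    {x y : V} (hxy : G.Adj x y) :
    ∀ n : ℕ, ∀ v : V, min (G.dist v x) (G.dist v y) = n →
      ∀ u : V, u ≠ v → u ≠ x → u ≠ y →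
      ∃ p : G.Walk u v, p.IsPath ∧ s(x, y) ∈ p.edges := by
  classical
  have hconn : G.Connected := aux_conn hcard h2
  intro n
  induction n using Nat.strong_induction_on with
  | _ n IH =>
    intro v hn u huv hux huy
    by_cases hvx : v = x
    · subst hvx
      have hyv : y ≠ v := G.ne_of_adj hxy.symm
      obtain ⟨q, hq, hqa⟩ := aux_avoid h2 huv hyv
      refine ⟨q.concat hxy.symm, ?_, ?_⟩
      · rw [Walk.concat_eq_append]
        refine aux_append_isPath hq (by simp [Walk.cons_isPath_iff, hyv]) ?_
        intro t htq htc
        rw [Walk.support_cons, Walk.support_nil] at htc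
        rcases List.mem_cons.mp htc with rfl | htc
        · rfl
        · simp only [List.mem_singleton] at htc
          exact absurd htc (hqa t htq)
      · rw [Walk.edges_concat, Sym2.eq_swap]
        simp
    by_cases hvy : v = y
    · subst hvy
      have hxv : x ≠ v := G.ne_of_adj hxy
      obtain ⟨q, hq, hqa⟩ := aux_avoid h2 huv hxv
      refine ⟨q.concat hxy, ?_, ?_⟩
      · rw [Walk.concat_eq_append]
        refine aux_append_isPath hq (by simp [Walk.cons_isPath_iff, hxv]) ?_
        intro t htq htc
        rw [Walk.support_cons, Walk.support_nil] at htc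
        rcases List.mem_cons.mp htc with rfl | htc
        · rfl
        · simp only [List.mem_singleton] at htc
          exact absurd htc (hqa t htq)
      · rw [Walk.edges_concat]
        simp
    -- inductive step
    have hnpos : 0 < n := by
      rw [← hn]
      exact lt_min (hconn.pos_dist_of_ne hvx) (hconn.pos_dist_of_ne hvy)
    -- pick a shortest walk from v to the nearer of x, y
    obtain ⟨t, htxy, W, hWlen⟩ :
        ∃ t, (t = x ∨ t = y) ∧ ∃ W : G.Walk v t, W.length = n := by
      rcases le_total (G.dist v x) (G.dist v y) with hle | hle
      · obtain ⟨W, hW⟩ := (hconn.preconnected v x).exists_walk_length_eq_dist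
        exact ⟨x, Or.inl rfl, W, by rw [hW, ← hn, min_eq_left hle]⟩
      · obtain ⟨W, hW⟩ := (hconn.preconnected v y).exists_walk_length_eq_dist
        exact ⟨y, Or.inr rfl, W, by rw [hW, ← hn, min_eq_right hle]⟩
    cases W with
    | nil =>
      exfalso
      rw [Walk.length_nil] at hWlen
      omega
    | @cons _ w _ hvw W' =>
      rw [Walk.length_cons] at hWlen
      have hwm : min (G.dist w x) (G.dist w y) < n := by
        have h1 : G.dist w t ≤ W'.length := SimpleGraph.dist_le W'
        have h2' : min (G.dist w x) (G.dist w y) ≤ G.dist w t := by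
          rcases htxy with rfl | rfl
          · exact min_le_left _ _
          · exact min_le_right _ _
        omega
      have hadj : G.Adj w v := hvw.symm
      by_cases hwu : w = u
      · -- apply IH with roles of u and v swapped
        subst hwu
        obtain ⟨q, hq, hqe⟩ := IH _ hwm w rfl v (Ne.symm huv) hvx hvy
        refine ⟨q.reverse, hq.reverse, ?_⟩
        rw [Walk.edges_reverse, List.mem_reverse]
        exact hqe
      · obtain ⟨P, hP, hPe⟩ := IH _ hwm w rfl u (Ne.symm hwu) hux huy
        by_cases hvP : v ∈ P.support
        · have hsplitE : P.edges = (P.takeUntil v hvP).edges ++ (P.dropUntil v hvP).edges := by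
            conv_lhs => rw [← P.take_spec hvP]
            rw [Walk.edges_append]
          rw [hsplitE, List.mem_append] at hPe
          rcases hPe with hPe | hPe
          · exact ⟨P.takeUntil v hvP, hP.takeUntil hvP, hPe⟩
          · -- the edge is on the part P2 from v to w
            set P2 : G.Walk v w := P.dropUntil v hvP with hP2def
            have hP2 : P2.IsPath := hP.dropUntil hvP
            have hwv : w ≠ v := G.ne_of_adj hadj
            obtain ⟨R', hR', hR'a⟩ := aux_avoid h2 huv hwv
            obtain ⟨z, hzS, R1w, hsub, hfirst⟩ :=
              aux_firsthit (fun s => s ∈ P2.support) R' P2.end_mem_support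
            set R1 : G.Walk u z := R1w.toPath.1 with hR1def
            have hR1 : R1.IsPath := R1w.toPath.2
            have hR1sub : ∀ s ∈ R1.support, s ∈ R1w.support :=
              fun s hs => Walk.support_toPath_subset _ hs
            have hR1nv : ∀ s ∈ R1.support, s ≠ v :=
              fun s hs => hR'a s (hsub s (hR1sub s hs))
            have hR1first : ∀ s ∈ R1.support, s ∈ P2.support → s = z :=
              fun s hs => hfirst s (hR1sub s hs)
            have hzv : z ≠ v := hR1nv z R1.end_mem_support
            have hsplitE2 : P2.edges = (P2.takeUntil z hzS).edges ++ (P2.dropUntil z hzS).edges := by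
              conv_lhs => rw [← P2.take_spec hzS]
              rw [Walk.edges_append]
            have hvQ2 : v ∉ (P2.dropUntil z hzS).support := by
              intro hvQ2
              rcases List.mem_cons.mp ((P2.dropUntil z hzS).support_eq_cons ▸ hvQ2) with h' | h'
              · exact hzv h'.symm
              · have hnd : P2.support.Nodup := P2.isPath_def.mp hP2
                have hsupp : P2.support =
                    (P2.takeUntil z hzS).support ++ (P2.dropUntil z hzS).support.tail := by
                  conv_lhs => rw [← P2.take_spec hzS]
                  rw [Walk.support_append]
                rw [hsupp] at hnd
                exact (List.disjoint_of_nodup_append hnd)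
                  (P2.takeUntil z hzS).start_mem_support h'
            rw [hsplitE2, List.mem_append] at hPe
            rcases hPe with hPe | hPe
            · -- edge on the piece from v to z : go u → z, then backwards to v
              refine ⟨R1.append (P2.takeUntil z hzS).reverse, ?_, ?_⟩
              · refine aux_append_isPath hR1 (hP2.takeUntil hzS).reverse ?_
                intro s hs hs'
                rw [Walk.support_reverse, List.mem_reverse] at hs'
                exact hR1first s hs (Walk.support_takeUntil_subset _ hzS hs')
              · rw [Walk.edges_append, Walk.edges_reverse, List.mem_append, List.mem_reverse]
                exact Or.inr hPe
            · -- edge on the piece from z to w : go u → z → w, then the edge w v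
              refine ⟨R1.append ((P2.dropUntil z hzS).concat hadj), ?_, ?_⟩
              · have hC : ((P2.dropUntil z hzS).concat hadj).IsPath := by
                  rw [Walk.concat_eq_append]
                  refine aux_append_isPath (hP2.dropUntil hzS)
                    (by simp [Walk.cons_isPath_iff, hwv]) ?_
                  intro s hsQ hsc
                  rw [Walk.support_cons, Walk.support_nil] at hsc
                  rcases List.mem_cons.mp hsc with rfl | hsc
                  · rfl
                  · simp only [List.mem_singleton] at hsc
                    subst hsc
                    exact absurd hsQ hvQ2
                refine aux_append_isPath hR1 hC ?_
                intro s hs hs'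
                rw [Walk.concat_eq_append, Walk.mem_support_append_iff] at hs'
                rcases hs' with hs' | hs'
                · exact hR1first s hs (Walk.support_dropUntil_subset _ hzS hs')
                · rw [Walk.support_cons, Walk.support_nil] at hs'
                  rcases List.mem_cons.mp hs' with rfl | hs'
                  · exact hR1first s hs (Walk.support_dropUntil_subset _ hzS
                      (P2.dropUntil z hzS).end_mem_support)
                  · simp only [List.mem_singleton] at hs'
                    exact absurd hs' (hR1nv s hs)
              · simp only [Walk.edges_append, Walk.edges_concat, List.concat_eq_append,
                  List.mem_append]
                exact Or.inr (Or.inl hPe)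
        · -- v not on P : just extend P by the edge w v
          refine ⟨P.concat hadj, ?_, ?_⟩
          · rw [Walk.concat_eq_append]
            refine aux_append_isPath hP (by simp [Walk.cons_isPath_iff, G.ne_of_adj hadj]) ?_
            intro s hsP hsc
            rw [Walk.support_cons, Walk.support_nil] at hsc
            rcases List.mem_cons.mp hsc with rfl | hsc
            · rfl
            · simp only [List.mem_singleton] at hsc
              subst hsc
              exact absurd hsP hvP
          · simp only [Walk.edges_concat, List.concat_eq_append, List.mem_append]
            exact Or.inl hPe

end Aux

/-- In a 2-connected graph, for any two distinct vertices `u, v` and any edge `xy`,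
there is a `u`-`v` path containing the edge `xy`. -/
theorem stmt_0 {V : Type*} [Fintype V] (G : SimpleGraph V) (hG : G.TwoConnected)
    (u v x y : V) (huv : u ≠ v) (hxy : G.Adj x y) :
    ∃ p : G.Walk u v, p.IsPath ∧ s(x, y) ∈ p.edges := by
  obtain ⟨hcard, h2⟩ := hG
  by_cases hu : u = x ∨ u = y
  · by_cases hv : v = x ∨ v = y
    · rcases hu with rfl | rfl <;> rcases hv with rfl | rfl
      · exact absurd rfl huv
      · exact ⟨Walk.cons hxy Walk.nil, by simp [Walk.cons_isPath_iff, G.ne_of_adj hxy], by simp⟩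
      · refine ⟨Walk.cons hxy.symm Walk.nil,
          by simp [Walk.cons_isPath_iff, (G.ne_of_adj hxy).symm], ?_⟩
        rw [Sym2.eq_swap]; simp
      · exact absurd rfl huv
    · push_neg at hv
      obtain ⟨q, hq, hqe⟩ := aux_key hcard h2 hxy _ u rfl v (Ne.symm huv) hv.1 hv.2
      refine ⟨q.reverse, hq.reverse, ?_⟩
      rw [Walk.edges_reverse, List.mem_reverse]
      exact hqe
  · push_neg at hu
    exact aux_key hcard h2 hxy _ v rfl u huv hu.1 hu.2
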